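/- Let ρ ∈ (0,1) and constants as above, and for c ∈ (0,1) let L_c = {(t,s,θ,α) ∈ ℝ⁴₊ : α = c·s} and 𝒫_ρ = {(t,s,θ,α) ∈ ℝ⁴₊ : α ≤ s and G_ρ(t,s,θ,α) ⪰ 0}, where G_ρ(t,s,θ,α) is the 5×5 symmetric matrix with diagonal ((1−1/ρ)t + μ_x, (1−1/ρ)s + μ_y, t − L_{xx}, s − α, α/ρ) and off-diagonals (2,3)-entry (θ/ρ−1)L_{yx}, (2,4)-entry (θ/ρ−1)L_{yy}, (3,5)-entry −(θ/ρ)L_{yx}, (4,5)-entry −(θ/ρ)L_{yy}, zeros elsewhere. Define 𝒞_ρ = {c ∈ (0,1) : 𝒫_ρ ∩ L_c ≠ ∅}. Then 𝒞_ρ is a convex subset of (0,1): if c₁, c₂ ∈ 𝒞_ρ and β ∈ [0,1], then βc₁ + (1−β)c₂ ∈ 𝒞_ρ. -/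

import Mathlib

/-- The 5×5 matrix `G_ρ(t,s,θ,α)` (the SAPD matrix inequality in the variables
`t = 1/τ`, `s = 1/σ`). -/
noncomputable def sapdGrho (Lxx Lyy Lyx μx μy ρ : ℝ) (t s θ α : ℝ) :
    Matrix (Fin 5) (Fin 5) ℝ :=
  !![(1 - 1 / ρ) * t + μx, 0, 0, 0, 0;
     0, (1 - 1 / ρ) * s + μy, (θ / ρ - 1) * Lyx, (θ / ρ - 1) * Lyy, 0;
     0, (θ / ρ - 1) * Lyx, t - Lxx, 0, -(θ / ρ) * Lyx;
     0, (θ / ρ - 1) * Lyy, 0, s - α, -(θ / ρ) * Lyy;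
     0, 0, -(θ / ρ) * Lyx, -(θ / ρ) * Lyy, α / ρ]

/-- The feasible set `𝒫_ρ ⊆ ℝ⁴₊`. -/
noncomputable def sapdP (Lxx Lyy Lyx μx μy ρ : ℝ) : Set (ℝ × ℝ × ℝ × ℝ) :=
  {p | 0 ≤ p.1 ∧ 0 ≤ p.2.1 ∧ 0 ≤ p.2.2.1 ∧ 0 ≤ p.2.2.2 ∧ p.2.2.2 ≤ p.2.1 ∧
    (sapdGrho Lxx Lyy Lyx μx μy ρ p.1 p.2.1 p.2.2.1 p.2.2.2).PosSemidef}

lemma psd_smul {A : Matrix (Fin 5) (Fin 5) ℝ} (hA : A.PosSemidef) {c : ℝ} (hc : 0 ≤ c) :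
    (c • A).PosSemidef := by
  refine ⟨?_, fun x => ?_⟩
  · unfold Matrix.IsHermitian
    rw [Matrix.conjTranspose_smul, hA.1]; simp
  · exact (hA.smul hc).2 x

lemma sapdGrho_affine (Lxx Lyy Lyx μx μy ρ : ℝ) (a : ℝ)
    (t₁ s₁ θ₁ α₁ t₂ s₂ θ₂ α₂ : ℝ) :
    sapdGrho Lxx Lyy Lyx μx μy ρ (a * t₁ + (1 - a) * t₂) (a * s₁ + (1 - a) * s₂)
        (a * θ₁ + (1 - a) * θ₂) (a * α₁ + (1 - a) * α₂)
      = a • sapdGrho Lxx Lyy Lyx μx μy ρ t₁ s₁ θ₁ α₁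
        + (1 - a) • sapdGrho Lxx Lyy Lyx μx μy ρ t₂ s₂ θ₂ α₂ := by
  ext i j
  fin_cases i <;> fin_cases j <;>
    simp [sapdGrho, Matrix.add_apply, Matrix.smul_apply, Matrix.vecHead,
      Matrix.vecTail] <;> ring_nf

/-- `𝒞_ρ` is convex: the set of `c ∈ (0,1)` such that `𝒫_ρ` meets the
slice `{α = c·s}` is convex. -/
theorem C_rho_convex
    (Lxx Lyy Lyx μx μy ρ : ℝ)
    (hLxx : 0 ≤ Lxx) (hLyy : 0 ≤ Lyy) (hLyx : 0 < Lyx)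
    (hμx : 0 < μx) (hμy : 0 < μy) (hρ0 : 0 < ρ) (hρ1 : ρ < 1) :
    ∀ c₁ ∈ {c : ℝ | c ∈ Set.Ioo (0 : ℝ) 1 ∧
        ∃ p ∈ sapdP Lxx Lyy Lyx μx μy ρ, p.2.2.2 = c * p.2.1},
      ∀ c₂ ∈ {c : ℝ | c ∈ Set.Ioo (0 : ℝ) 1 ∧
        ∃ p ∈ sapdP Lxx Lyy Lyx μx μy ρ, p.2.2.2 = c * p.2.1},
      ∀ β : ℝ, 0 ≤ β → β ≤ 1 →
        β * c₁ + (1 - β) * c₂ ∈ {c : ℝ | c ∈ Set.Ioo (0 : ℝ) 1 ∧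
          ∃ p ∈ sapdP Lxx Lyy Lyx μx μy ρ, p.2.2.2 = c * p.2.1} := by
  rintro c₁ ⟨⟨hc₁0, hc₁1⟩, ⟨t₁, s₁, θ₁, α₁⟩, ⟨ht₁, hs₁, hθ₁, hα₁, hαs₁, hG₁⟩, hsl₁⟩
  rintro c₂ ⟨⟨hc₂0, hc₂1⟩, ⟨t₂, s₂, θ₂, α₂⟩, ⟨ht₂, hs₂, hθ₂, hα₂, hαs₂, hG₂⟩, hsl₂⟩
  intro β hβ0 hβ1
  simp only [Set.mem_setOf_eq] at *
  constructor
  · rcases le_total c₁ c₂ with h | h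
    · constructor
      · nlinarith [mul_nonneg (sub_nonneg.mpr hβ1) (sub_nonneg.mpr h)]
      · nlinarith [mul_nonneg hβ0 (sub_nonneg.mpr h)]
    · constructor
      · nlinarith [mul_nonneg hβ0 (sub_nonneg.mpr h)]
      · nlinarith [mul_nonneg (sub_nonneg.mpr hβ1) (sub_nonneg.mpr h)]
  · by_cases hD : (1 - β) * s₁ + β * s₂ = 0
    · -- degenerate case: use p₁
      refine ⟨(t₁, s₁, θ₁, α₁), ⟨ht₁, hs₁, hθ₁, hα₁, hαs₁, hG₁⟩, ?_⟩
      have h1 : 0 ≤ (1 - β) * s₁ := mul_nonneg (by linarith) hs₁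
      have h2 : 0 ≤ β * s₂ := mul_nonneg hβ0 hs₂
      have h1' : (1 - β) * s₁ = 0 := by linarith
      rcases mul_eq_zero.mp h1' with h | h
      · have hβ : β = 1 := by linarith
        simp only [hβ]; simpa using hsl₁
      · simp only [h, mul_zero] at hsl₁ ⊢; exact hsl₁
    · have hDpos : 0 < (1 - β) * s₁ + β * s₂ :=
        (add_nonneg (mul_nonneg (by linarith : (0:ℝ) ≤ 1 - β) hs₁)
          (mul_nonneg hβ0 hs₂)).lt_of_ne (Ne.symm hD)
      set D := (1 - β) * s₁ + β * s₂ with hDdef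
      set a := β * s₂ / D with ha
      have ha0 : 0 ≤ a := div_nonneg (mul_nonneg hβ0 hs₂) hDpos.le
      have hb0 : 0 ≤ 1 - a := by
        have : a ≤ 1 := by
          rw [ha, div_le_one hDpos]
          nlinarith [mul_nonneg (sub_nonneg.mpr hβ1) hs₁]
        linarith
      refine ⟨(a * t₁ + (1 - a) * t₂, a * s₁ + (1 - a) * s₂,
          a * θ₁ + (1 - a) * θ₂, a * α₁ + (1 - a) * α₂), ⟨?_, ?_, ?_, ?_, ?_, ?_⟩, ?_⟩
      · exact add_nonneg (mul_nonneg ha0 ht₁) (mul_nonneg hb0 ht₂)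
      · exact add_nonneg (mul_nonneg ha0 hs₁) (mul_nonneg hb0 hs₂)
      · exact add_nonneg (mul_nonneg ha0 hθ₁) (mul_nonneg hb0 hθ₂)
      · exact add_nonneg (mul_nonneg ha0 hα₁) (mul_nonneg hb0 hα₂)
      · have := mul_le_mul_of_nonneg_left hαs₁ ha0
        have := mul_le_mul_of_nonneg_left hαs₂ hb0
        dsimp only; linarith
      · dsimp only
        rw [sapdGrho_affine]
        exact (psd_smul hG₁ ha0).add (psd_smul hG₂ hb0)
      · dsimp only
        rw [hsl₁, hsl₂, ha]
        have h1a : 1 - β * s₂ / D = (1 - β) * s₁ / D := by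
          field_simp
          rw [hDdef]; ring
        rw [h1a]
        field_simp
        ring
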